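/- Lemma 3.2 (uniform two-sided bounds). Let (Ū, V̄) be a C¹ solution of system (3.8) on the region Ω which extends continuously to the boundary curve Γ = {(t, r̃(t)) : 0 < t ≤ t₀} with boundary values satisfying m̄₀ ≤ Ū(t, r̃(t)), V̄(t, r̃(t)) ≤ M̄₀ for all t ∈ (0,t₀], where 0 < m̄₀ ≤ M̄₀. Set k₀ = (κ+2)/(κ(1−t₀²)). Then for all (t,r) ∈ Ω one has (1/2)·m̄₀ ≤ Ū(t,r) ≤ 2e^{k₀}·M̄₀ and (1/2)·m̄₀ ≤ V̄(t,r) ≤ 2e^{k₀}·M̄₀. -/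

import Mathlib

/-- Partial derivative in the first (t) variable. -/
noncomputable def pdt (f : ℝ × ℝ → ℝ) (p : ℝ × ℝ) : ℝ := fderiv ℝ f p (1, 0)

/-- Partial derivative in the second (r) variable. -/
noncomputable def pdr (f : ℝ × ℝ → ℝ) (p : ℝ × ℝ) : ℝ := fderiv ℝ f p (0, 1)

/-- The characteristic speed λ(t) = √(1−t²)·t²/F(t), F(t) = (1−t²)(κ+1−t²). -/
noncomputable def lam (κ t : ℝ) : ℝ :=
  Real.sqrt (1 - t^2) * t^2 / ((1 - t^2) * (κ + 1 - t^2))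

/-- ř(t) = r₀ − ∫ₜ^{t₀} λ(s) ds, the positive characteristic through (t₀,r₀). -/
noncomputable def rcheck (κ t₀ r₀ t : ℝ) : ℝ := r₀ - ∫ s in t..t₀, lam κ s

/-- The region Ω = {(t,r) : 0 < t ≤ t₀, r̃(t) ≤ r ≤ ř(t)}. -/
def region (κ t₀ r₀ : ℝ) (rt : ℝ → ℝ) : Set (ℝ × ℝ) :=
  {p : ℝ × ℝ | 0 < p.1 ∧ p.1 ≤ t₀ ∧ rt p.1 ≤ p.2 ∧ p.2 ≤ rcheck κ t₀ r₀ p.1}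

/-- The linear system (3.8) holding at every point of a set `D`. -/
def Sys38 (κ : ℝ) (Ub Vb : ℝ × ℝ → ℝ) (D : Set (ℝ × ℝ)) : Prop :=
  ∀ p ∈ D,
    pdt Ub p + lam κ p.1 * pdr Ub p =
      (Ub p - Vb p) / (2 * p.1)
      + ((κ + 2 - p.1^2) * p.1 / (2 * ((1 - p.1^2) * (κ + 1 - p.1^2)))) * (Ub p - Vb p)
      - ((κ + 2 - 2*p.1^2) * p.1 / ((1 - p.1^2) * (κ + 1 - p.1^2))) * Ub p ∧
    pdt Vb p - lam κ p.1 * pdr Vb p =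
      (Vb p - Ub p) / (2 * p.1)
      - ((κ + 2 - p.1^2) * p.1 / (2 * ((1 - p.1^2) * (κ + 1 - p.1^2)))) * (Ub p - Vb p)
      - ((κ + 2 - 2*p.1^2) * p.1 / ((1 - p.1^2) * (κ + 1 - p.1^2))) * Vb p


open Set Filter intervalIntegral

lemma lam_contAt (κ : ℝ) (hκ : 0 < κ) {t : ℝ} (h : t^2 < 1) : ContinuousAt (lam κ) t := by
  apply ContinuousAt.div
  · exact ((continuous_const.sub (continuous_pow 2)).sqrt.mul (continuous_pow 2)).continuousAt
  · exact (by fun_prop : Continuous fun x : ℝ => (1 - x^2) * (κ + 1 - x^2)).continuousAt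
  · nlinarith

lemma lam_nonneg (κ : ℝ) (hκ : 0 < κ) {t : ℝ} (h : t^2 < 1) : 0 ≤ lam κ t := by
  apply div_nonneg (mul_nonneg (Real.sqrt_nonneg _) (sq_nonneg _))
  nlinarith

lemma lam_contOn (κ t₀ : ℝ) (hκ : 0 < κ) (ht₀ : t₀ ∈ Set.Ioo (0:ℝ) 1) :
    ContinuousOn (lam κ) (Icc 0 t₀) := fun t ht => by
  have : t^2 < 1 := by
    obtain ⟨h1, h2⟩ := ht; obtain ⟨h3, h4⟩ := ht₀; nlinarith
  exact (lam_contAt κ hκ this).continuousWithinAt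

lemma lam_integrable (κ t₀ : ℝ) (hκ : 0 < κ) (ht₀ : t₀ ∈ Set.Ioo (0:ℝ) 1)
    {a b : ℝ} (ha : a ∈ Icc 0 t₀) (hb : b ∈ Icc 0 t₀) :
    IntervalIntegrable (lam κ) MeasureTheory.volume a b :=
  ((lam_contOn κ t₀ hκ ht₀).mono (uIcc_subset_Icc ha hb)).intervalIntegrable

/-- Additivity: for a,b in [0,t₀], rcheck b − rcheck a = ∫ a..b λ. -/
lemma rcheck_sub (κ t₀ r₀ : ℝ) (hκ : 0 < κ) (ht₀ : t₀ ∈ Set.Ioo (0:ℝ) 1)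
    {a b : ℝ} (ha : a ∈ Icc 0 t₀) (hb : b ∈ Icc 0 t₀) :
    rcheck κ t₀ r₀ b - rcheck κ t₀ r₀ a = ∫ s in a..b, lam κ s := by
  have h1 := integral_add_adjacent_intervals (μ := MeasureTheory.volume)
    (lam_integrable κ t₀ hκ ht₀ ha hb)
    (lam_integrable κ t₀ hκ ht₀ hb (right_mem_Icc.2 ht₀.1.le))
  unfold rcheck; linarith

lemma rcheck_contOn (κ t₀ r₀ : ℝ) (hκ : 0 < κ) (ht₀ : t₀ ∈ Set.Ioo (0:ℝ) 1) :
    ContinuousOn (rcheck κ t₀ r₀) (Icc 0 t₀) := by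
  have ht₀m : t₀ ∈ Icc (0:ℝ) t₀ := right_mem_Icc.2 ht₀.1.le
  have h0m : (0:ℝ) ∈ Icc (0:ℝ) t₀ := left_mem_Icc.2 ht₀.1.le
  have hprim : ContinuousOn (fun x => ∫ s in (0:ℝ)..x, lam κ s) (Icc 0 t₀) := by
    have := intervalIntegral.continuousOn_primitive_interval
      (a := 0) (b := t₀) (μ := MeasureTheory.volume) (f := lam κ)
      (((lam_contOn κ t₀ hκ ht₀).mono (by rw [uIcc_of_le ht₀.1.le])).integrableOn_compact
        (by rw [uIcc_of_le ht₀.1.le]; exact isCompact_Icc))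
    rwa [uIcc_of_le ht₀.1.le] at this
  have : ∀ t ∈ Icc (0:ℝ) t₀,
      rcheck κ t₀ r₀ t = rcheck κ t₀ r₀ 0 + ∫ s in (0:ℝ)..t, lam κ s := by
    intro t ht
    have := rcheck_sub κ t₀ r₀ hκ ht₀ h0m ht
    linarith
  exact (continuousOn_const.add hprim).congr this

lemma rcheck_mono (κ t₀ r₀ : ℝ) (hκ : 0 < κ) (ht₀ : t₀ ∈ Set.Ioo (0:ℝ) 1)
    {a b : ℝ} (ha : a ∈ Icc 0 t₀) (hb : b ∈ Icc 0 t₀) (hab : a ≤ b) :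
    rcheck κ t₀ r₀ a ≤ rcheck κ t₀ r₀ b := by
  have h := rcheck_sub κ t₀ r₀ hκ ht₀ ha hb
  have : 0 ≤ ∫ s in a..b, lam κ s := by
    apply intervalIntegral.integral_nonneg hab
    intro u hu
    have h1 : u^2 < 1 := by
      rcases ha with ⟨ha0, _⟩; rcases hb with ⟨_, hb1⟩; rcases hu with ⟨hu0, hu1⟩
      rcases ht₀ with ⟨c, d⟩
      nlinarith
    exact lam_nonneg κ hκ h1
  linarith

lemma rcheck_hasDerivAt (κ t₀ r₀ : ℝ) (hκ : 0 < κ) (ht₀ : t₀ ∈ Set.Ioo (0:ℝ) 1)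
    {t : ℝ} (ht : t ∈ Ioo 0 t₀) : HasDerivAt (rcheck κ t₀ r₀) (lam κ t) t := by
  have htm : t ∈ Icc (0:ℝ) t₀ := ⟨ht.1.le, ht.2.le⟩
  have h0m : (0:ℝ) ∈ Icc (0:ℝ) t₀ := left_mem_Icc.2 ht₀.1.le
  have ht2 : t^2 < 1 := by rcases ht with ⟨a, b⟩; rcases ht₀ with ⟨c, d⟩; nlinarith
  have hprim : HasDerivAt (fun u => ∫ s in (0:ℝ)..u, lam κ s) (lam κ t) t := by
    apply intervalIntegral.integral_hasDerivAt_right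
      (lam_integrable κ t₀ hκ ht₀ h0m htm)
    · exact ContinuousOn.stronglyMeasurableAtFilter (s := Ioo 0 t₀) isOpen_Ioo
        (fun u hu => ((lam_contOn κ t₀ hκ ht₀) u ⟨hu.1.le, hu.2.le⟩).mono Ioo_subset_Icc_self)
        t ht
    · exact lam_contAt κ hκ ht2
  have heq : (fun u => rcheck κ t₀ r₀ 0 + ∫ s in (0:ℝ)..u, lam κ s) =ᶠ[nhds t] rcheck κ t₀ r₀ := by
    filter_upwards [Ioo_mem_nhds ht.1 ht.2] with u hu
    have := rcheck_sub κ t₀ r₀ hκ ht₀ h0m ⟨hu.1.le, hu.2.le⟩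
    linarith
  simpa using ((hasDerivAt_const _ _).add hprim).congr_of_eventuallyEq heq.symm

lemma rcheck_t₀ (κ t₀ r₀ : ℝ) : rcheck κ t₀ r₀ t₀ = r₀ := by
  simp [rcheck]

lemma rt_diffAt (t₀ : ℝ) (rt : ℝ → ℝ) (hrtC1 : ContDiffOn ℝ 1 rt (Set.Icc 0 t₀))
    {x : ℝ} (hx : x ∈ Ioo 0 t₀) : DifferentiableAt ℝ rt x :=
  (hrtC1.contDiffAt (Icc_mem_nhds hx.1 hx.2)).differentiableAt one_ne_zero

lemma gap_pos (κ t₀ r₀ : ℝ) (hκ : 0 < κ) (ht₀ : t₀ ∈ Set.Ioo (0:ℝ) 1)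
    (rt : ℝ → ℝ) (hrtC1 : ContDiffOn ℝ 1 rt (Set.Icc 0 t₀)) (hrtt0 : rt t₀ = r₀)
    (hspace : ∀ t ∈ Set.Ioc (0:ℝ) t₀, lam κ t < deriv rt t)
    {t : ℝ} (ht : t ∈ Ico 0 t₀) : rt t < rcheck κ t₀ r₀ t := by
  set G : ℝ → ℝ := fun s => rt s - rcheck κ t₀ r₀ s with hG
  have hsub : Icc t t₀ ⊆ Icc 0 t₀ := Icc_subset_Icc ht.1 le_rfl
  have hcont : ContinuousOn G (Icc t t₀) :=
    (hrtC1.continuousOn.mono hsub).sub ((rcheck_contOn κ t₀ r₀ hκ ht₀).mono hsub)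
  have hmono : StrictMonoOn G (Icc t t₀) := by
    apply strictMonoOn_of_deriv_pos (convex_Icc _ _) hcont
    intro x hx
    rw [interior_Icc] at hx
    have hx' : x ∈ Ioo 0 t₀ := ⟨lt_of_le_of_lt ht.1 hx.1, hx.2⟩
    have hd : HasDerivAt G (deriv rt x - lam κ x) x :=
      ((rt_diffAt t₀ rt hrtC1 hx').hasDerivAt).sub (rcheck_hasDerivAt κ t₀ r₀ hκ ht₀ hx')
    rw [hd.deriv]
    have := hspace x ⟨hx'.1, hx'.2.le⟩
    linarith
  have h2 : G t < G t₀ := hmono (left_mem_Icc.2 ht.2.le) (right_mem_Icc.2 ht.2.le) ht.2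
  have h3 : G t₀ = 0 := by simp [hG, hrtt0, rcheck_t₀]
  simp only [hG] at h2 h3 ⊢
  linarith

lemma char_exists (κ t₀ r₀ : ℝ) (hκ : 0 < κ) (ht₀ : t₀ ∈ Set.Ioo (0:ℝ) 1)
    (rt : ℝ → ℝ) (hrtC1 : ContDiffOn ℝ 1 rt (Set.Icc 0 t₀)) (hrtt0 : rt t₀ = r₀)
    {δ ts rs s : ℝ} (hδ : 0 < δ) (hs : s = 1 ∨ s = -1)
    (h1 : 0 < ts) (h2 : ts ≤ t₀) (h3 : rt ts < rs) (h4 : rs ≤ rcheck κ t₀ r₀ ts - δ) :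
    ∃ ε > 0, ts < t₀ ∧
      HasDerivAt (fun t => rs + s * (rcheck κ t₀ r₀ t - rcheck κ t₀ r₀ ts)) (s * lam κ ts) ts ∧
      ∀ t ∈ Icc ts (ts+ε), 0 < t ∧ t ≤ t₀ ∧
        rt t < rs + s * (rcheck κ t₀ r₀ t - rcheck κ t₀ r₀ ts) ∧
        rs + s * (rcheck κ t₀ r₀ t - rcheck κ t₀ r₀ ts) ≤ rcheck κ t₀ r₀ t - δ := by
  set γ : ℝ → ℝ := fun t => rs + s * (rcheck κ t₀ r₀ t - rcheck κ t₀ r₀ ts) with hγ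
  -- t* < t₀
  have hlt : ts < t₀ := by
    rcases eq_or_lt_of_le h2 with h | h
    · exfalso
      rw [h, rcheck_t₀, ← hrtt0] at h4
      have := h3.trans_le h4
      rw [h] at this
      linarith
    · exact h
  have hderiv : HasDerivAt γ (s * lam κ ts) ts := by
    have := (rcheck_hasDerivAt κ t₀ r₀ hκ ht₀ (⟨h1, hlt⟩ : ts ∈ Ioo 0 t₀)).const_mul s
    have h' := (this.sub_const (s * rcheck κ t₀ r₀ ts)).const_add rs
    refine h'.congr_of_eventuallyEq (Filter.Eventually.of_forall fun t => ?_)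
    simp only [hγ]; ring
  -- eventually rt < γ on the right
  have hcontγ : ContinuousWithinAt (fun t => γ t - rt t) (Icc ts t₀) ts := by
    have hsub : Icc ts t₀ ⊆ Icc 0 t₀ := Icc_subset_Icc h1.le le_rfl
    have c1 : ContinuousWithinAt (rcheck κ t₀ r₀) (Icc ts t₀) ts :=
      ((rcheck_contOn κ t₀ r₀ hκ ht₀).mono hsub) ts (left_mem_Icc.2 hlt.le)
    have c2 : ContinuousWithinAt rt (Icc ts t₀) ts :=
      ((hrtC1.continuousOn).mono hsub) ts (left_mem_Icc.2 hlt.le)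
    exact ((continuousWithinAt_const.add ((c1.sub continuousWithinAt_const).const_smul s))).sub c2
  have hpos0 : 0 < γ ts - rt ts := by simp [hγ]; linarith
  have hev : ∀ᶠ t in nhdsWithin ts (Icc ts t₀), 0 < γ t - rt t :=
    hcontγ.eventually (eventually_gt_nhds hpos0)
  rw [nhdsWithin_Icc_eq_nhdsGE hlt] at hev
  rcases mem_nhdsGE_iff_exists_Icc_subset.1 hev with ⟨u, hu, hsubset⟩
  refine ⟨min (u - ts) (t₀ - ts), by simp [hu, hlt], hlt, hderiv, ?_⟩
  intro t ht
  rcases ht with ⟨htl, htr⟩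
  have ht1 : t ≤ u := by
    have := min_le_left (u - ts) (t₀ - ts); linarith
  have ht2 : t ≤ t₀ := by
    have := min_le_right (u - ts) (t₀ - ts); linarith
  have ht0 : 0 < t := h1.trans_le htl
  have hmem : t ∈ Icc (0:ℝ) t₀ := ⟨ht0.le, ht2⟩
  have hrtlt : rt t < γ t := by
    have := hsubset ⟨htl, ht1⟩
    simp only [mem_setOf_eq] at this
    linarith
  refine ⟨ht0, ht2, hrtlt, ?_⟩
  have hmono := rcheck_mono κ t₀ r₀ hκ ht₀ (⟨h1.le, h2⟩ : ts ∈ Icc 0 t₀) hmem htl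
  rcases hs with rfl | rfl
  · linarith
  · linarith

lemma no_pos_deriv {w : ℝ → ℝ} {c ts ε : ℝ} (hw : HasDerivAt w c ts) (hc : 0 < c)
    (h0 : w ts = 0) (hε : 0 < ε) (hle : ∀ t ∈ Ioc ts (ts+ε), w t ≤ 0) : False := by
  have hT := hasDerivAt_iff_tendsto_slope.1 hw
  have h1 : ∀ᶠ x in nhdsWithin ts {ts}ᶜ, 0 < slope w ts x := hT.eventually (eventually_gt_nhds hc)
  have hmono : nhdsWithin ts (Ioi ts) ≤ nhdsWithin ts {ts}ᶜ :=
    nhdsWithin_mono ts (fun x hx => ne_of_gt hx)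
  have h2 : ∀ᶠ x in nhdsWithin ts (Ioi ts), x ∈ Ioc ts (ts+ε) :=
    eventually_of_mem (Ioc_mem_nhdsGT_of_mem ⟨le_rfl, by linarith⟩) (fun x hx => hx)
  rcases ((h1.filter_mono hmono).and h2).exists with ⟨x, hx1, hx2⟩
  rw [slope_def_field, h0, sub_zero] at hx1
  have := hle x hx2
  have hxp : 0 < x - ts := by have := hx2.1; linarith
  have h4 : 0 < w x := by
    have h5 := mul_pos hx1 hxp
    rwa [div_mul_cancel₀ _ (ne_of_gt hxp)] at h5
  linarith

lemma no_neg_deriv {w : ℝ → ℝ} {c ts ε : ℝ} (hw : HasDerivAt w c ts) (hc : c < 0)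
    (h0 : w ts = 0) (hε : 0 < ε) (hle : ∀ t ∈ Ioc ts (ts+ε), 0 ≤ w t) : False := by
  apply no_pos_deriv hw.neg (by linarith : (0:ℝ) < -c) (by simp [h0]) hε
  intro t ht; simpa using hle t ht

lemma deriv_along (f : ℝ × ℝ → ℝ) {p : ℝ × ℝ} (hf : DifferentiableAt ℝ f p)
    {γ : ℝ → ℝ} {g' : ℝ} (hγ : HasDerivAt γ g' p.1) (hγp : γ p.1 = p.2) :
    HasDerivAt (fun t => f (t, γ t)) (pdt f p + g' * pdr f p) p.1 := by
  have hF : HasDerivAt (fun t => ((t, γ t) : ℝ × ℝ)) ((1:ℝ), g') p.1 :=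
    (hasDerivAt_id _).prodMk hγ
  have hp : ((p.1, γ p.1) : ℝ × ℝ) = p := by rw [hγp]
  have hl : HasFDerivAt f (fderiv ℝ f p) (p.1, γ p.1) := hp ▸ hf.hasFDerivAt
  have hcomp := HasFDerivAt.comp_hasDerivAt p.1 hl hF
  have hval : (fderiv ℝ f p) ((1:ℝ), g') = pdt f p + g' * pdr f p := by
    have h1 : ((1:ℝ), g') = ((1:ℝ), (0:ℝ)) + g' • ((0:ℝ), (1:ℝ)) := by simp
    rw [h1, map_add, map_smul, smul_eq_mul]
    rfl
  rw [hval] at hcomp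
  exact hcomp

lemma coeff_bound (κ t₀ : ℝ) (hκ : 0 < κ) (ht₀ : t₀ ∈ Set.Ioo (0:ℝ) 1)
    {t : ℝ} (h1 : 0 < t) (h2 : t ≤ t₀) :
    0 < (1 - t^2) * (κ + 1 - t^2) ∧
    0 ≤ (κ + 2 - t^2) * t / (2*((1 - t^2) * (κ + 1 - t^2))) ∧
    0 < (κ + 2 - 2*t^2) * t / ((1 - t^2) * (κ + 1 - t^2)) ∧
    (κ + 2 - 2*t^2) * t / ((1 - t^2) * (κ + 1 - t^2)) < (κ+2)*t₀/(κ*(1-t₀^2)) := by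
  obtain ⟨ht₀0, ht₀1⟩ := ht₀
  have ht2 : t^2 ≤ t₀^2 := by nlinarith
  have ht₀2 : t₀^2 < 1 := by nlinarith
  have hF : 0 < (1 - t^2) * (κ + 1 - t^2) := by nlinarith
  refine ⟨hF, ?_, ?_, ?_⟩
  · apply div_nonneg _ (by linarith)
    nlinarith
  · apply div_pos _ hF
    nlinarith
  · rw [div_lt_div_iff₀ hF (by nlinarith)]
    have hA : (0:ℝ) < (κ + 2 - 2*t^2) * t := by nlinarith
    have hC : (0:ℝ) < (κ + 2) * t₀ := by nlinarith
    have hB : (0:ℝ) < κ * (1 - t₀^2) := by nlinarith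
    have hAC : (κ + 2 - 2*t^2) * t ≤ (κ + 2) * t₀ := by nlinarith
    have hBD : κ * (1 - t₀^2) < (1 - t^2) * (κ + 1 - t^2) := by nlinarith
    calc (κ + 2 - 2*t^2) * t * (κ * (1 - t₀^2)) ≤ (κ + 2) * t₀ * (κ * (1 - t₀^2)) :=
          mul_le_mul_of_nonneg_right hAC hB.le
      _ < (κ + 2) * t₀ * ((1 - t^2) * (κ + 1 - t^2)) := by
          exact mul_lt_mul_of_pos_left hBD hC

lemma region_mem_nhds (κ t₀ r₀ : ℝ) (hκ : 0 < κ) (ht₀ : t₀ ∈ Set.Ioo (0:ℝ) 1)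
    (rt : ℝ → ℝ) (hrtC1 : ContDiffOn ℝ 1 rt (Set.Icc 0 t₀)) {a : ℝ × ℝ}
    (h1 : 0 < a.1) (h2 : a.1 < t₀) (h3 : rt a.1 < a.2) (h4 : a.2 < rcheck κ t₀ r₀ a.1) :
    region κ t₀ r₀ rt ∈ nhds a := by
  set S : Set (ℝ × ℝ) := Ioo 0 t₀ ×ˢ (univ : Set ℝ) with hS
  have hSopen : IsOpen S := isOpen_Ioo.prod isOpen_univ
  have hfst : ContinuousOn (fun q : ℝ × ℝ => q.1) S := continuous_fst.continuousOn
  have hmaps : ∀ q ∈ S, q.1 ∈ Icc (0:ℝ) t₀ := fun q hq => ⟨hq.1.1.le, hq.1.2.le⟩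
  have hrtcont : ContinuousOn (fun q : ℝ × ℝ => q.2 - rt q.1) S :=
    continuous_snd.continuousOn.sub (hrtC1.continuousOn.comp hfst hmaps)
  have hrccont : ContinuousOn (fun q : ℝ × ℝ => rcheck κ t₀ r₀ q.1 - q.2) S :=
    ((rcheck_contOn κ t₀ r₀ hκ ht₀).comp hfst hmaps).sub continuous_snd.continuousOn
  have hW1 : IsOpen (S ∩ (fun q : ℝ × ℝ => q.2 - rt q.1) ⁻¹' Ioi 0) :=
    hrtcont.isOpen_inter_preimage hSopen isOpen_Ioi
  have hW : IsOpen ((S ∩ (fun q : ℝ × ℝ => q.2 - rt q.1) ⁻¹' Ioi 0) ∩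
      (fun q : ℝ × ℝ => rcheck κ t₀ r₀ q.1 - q.2) ⁻¹' Ioi 0) :=
    (hrccont.mono inter_subset_left).isOpen_inter_preimage hW1 isOpen_Ioi
  apply mem_of_superset (hW.mem_nhds ?_)
  · rintro q ⟨⟨⟨hq1, -⟩, hq2⟩, hq3⟩
    simp only [mem_preimage, mem_Ioi] at hq2 hq3
    exact ⟨hq1.1, hq1.2.le, by linarith, by linarith⟩
  · exact ⟨⟨⟨⟨h1, h2⟩, trivial⟩, by simp only [mem_preimage, mem_Ioi]; linarith⟩,
      by simp only [mem_preimage, mem_Ioi]; linarith⟩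

lemma Kcpt (κ t₀ r₀ : ℝ) (hκ : 0 < κ) (ht₀ : t₀ ∈ Set.Ioo (0:ℝ) 1)
    (rt : ℝ → ℝ) (hrtC1 : ContDiffOn ℝ 1 rt (Set.Icc 0 t₀)) {c δ : ℝ} (hc : 0 < c) :
    IsCompact {q : ℝ × ℝ | q.1 ∈ Icc c t₀ ∧ q.2 ∈ Icc 0 r₀ ∧
      rt q.1 ≤ q.2 ∧ q.2 ≤ rcheck κ t₀ r₀ q.1 - δ} := by
  by_cases hct : c ≤ t₀
  · set S : Set (ℝ × ℝ) := Icc c t₀ ×ˢ Icc (0:ℝ) r₀ with hS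
    have hSc : IsCompact S := isCompact_Icc.prod isCompact_Icc
    have hScl : IsClosed S := isClosed_Icc.prod isClosed_Icc
    have hfst : ContinuousOn (fun q : ℝ × ℝ => q.1) S := continuous_fst.continuousOn
    have hmaps : ∀ q ∈ S, q.1 ∈ Icc (0:ℝ) t₀ := fun q hq => ⟨hc.le.trans hq.1.1, hq.1.2⟩
    have h1 : IsClosed (S ∩ (fun q : ℝ × ℝ => q.2 - rt q.1) ⁻¹' Ici 0) :=
      (continuous_snd.continuousOn.sub
        (hrtC1.continuousOn.comp hfst hmaps)).preimage_isClosed_of_isClosed hScl isClosed_Ici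
    have h2 : IsClosed ((S ∩ (fun q : ℝ × ℝ => q.2 - rt q.1) ⁻¹' Ici 0) ∩
        (fun q : ℝ × ℝ => rcheck κ t₀ r₀ q.1 - δ - q.2) ⁻¹' Ici 0) :=
      ((((rcheck_contOn κ t₀ r₀ hκ ht₀).comp hfst hmaps).sub
        continuous_const.continuousOn).sub continuous_snd.continuousOn).mono
          inter_subset_left |>.preimage_isClosed_of_isClosed h1 isClosed_Ici
    have hKeq : {q : ℝ × ℝ | q.1 ∈ Icc c t₀ ∧ q.2 ∈ Icc 0 r₀ ∧
        rt q.1 ≤ q.2 ∧ q.2 ≤ rcheck κ t₀ r₀ q.1 - δ} =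
        ((S ∩ (fun q : ℝ × ℝ => q.2 - rt q.1) ⁻¹' Ici 0) ∩
        (fun q : ℝ × ℝ => rcheck κ t₀ r₀ q.1 - δ - q.2) ⁻¹' Ici 0) := by
      ext q
      simp only [mem_setOf_eq, hS, mem_inter_iff, mem_prod, mem_preimage, mem_Ici]
      constructor
      · rintro ⟨a, b, c', d⟩; exact ⟨⟨⟨a, b⟩, by linarith⟩, by linarith⟩
      · rintro ⟨⟨⟨a, b⟩, c'⟩, d⟩; exact ⟨a, b, by linarith, by linarith⟩
    rw [hKeq]
    exact hSc.of_isClosed_subset h2 (inter_subset_left.trans inter_subset_left)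
  · have : {q : ℝ × ℝ | q.1 ∈ Icc c t₀ ∧ q.2 ∈ Icc 0 r₀ ∧
        rt q.1 ≤ q.2 ∧ q.2 ≤ rcheck κ t₀ r₀ q.1 - δ} = ∅ := by
      ext q; simp only [mem_setOf_eq, mem_empty_iff_false, iff_false]
      rintro ⟨⟨a, b⟩, -⟩
      exact hct (a.trans b)
    rw [this]; exact isCompact_empty

noncomputable def phiB (t₀ m₀ t : ℝ) : ℝ := (3/4)*m₀*Real.exp (-(Real.log (3/2)/t₀)*(t₀ - t))
noncomputable def psiB (κ t₀ M₀ t : ℝ) : ℝ := (3/2)*M₀*Real.exp ((κ+2)*t₀/(κ*(1-t₀^2))*(t₀ - t))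

lemma phiB_pos {t₀ m₀ : ℝ} (hm₀ : 0 < m₀) (t : ℝ) : 0 < phiB t₀ m₀ t := by
  unfold phiB; positivity

lemma psiB_pos {κ t₀ M₀ : ℝ} (hM₀ : 0 < M₀) (t : ℝ) : 0 < psiB κ t₀ M₀ t := by
  unfold psiB; positivity

lemma phiB_le {t₀ m₀ : ℝ} (hm₀ : 0 < m₀) (ht₀ : 0 < t₀) {t : ℝ} (h2 : t ≤ t₀) :
    phiB t₀ m₀ t ≤ (3/4)*m₀ := by
  unfold phiB
  have hlog : 0 < Real.log (3/2) := Real.log_pos (by norm_num)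
  have : -(Real.log (3/2)/t₀)*(t₀ - t) ≤ 0 := by
    apply mul_nonpos_of_nonpos_of_nonneg _ (by linarith)
    have : 0 < Real.log (3/2)/t₀ := by positivity
    linarith
  nlinarith [Real.exp_le_one_iff.2 this, Real.exp_pos (-(Real.log (3/2)/t₀)*(t₀ - t))]

lemma half_le_phiB {t₀ m₀ : ℝ} (hm₀ : 0 < m₀) (ht₀ : 0 < t₀) {t : ℝ} (h1 : 0 ≤ t) :
    m₀/2 ≤ phiB t₀ m₀ t := by
  unfold phiB
  have hlog : 0 < Real.log (3/2) := Real.log_pos (by norm_num)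
  have hexp : Real.exp (-Real.log (3/2)) ≤ Real.exp (-(Real.log (3/2)/t₀)*(t₀ - t)) := by
    apply Real.exp_le_exp.2
    rw [neg_mul, neg_le_neg_iff, div_mul_eq_mul_div, div_le_iff₀ ht₀]
    nlinarith
  have : Real.exp (-Real.log (3/2)) = 2/3 := by
    rw [Real.exp_neg, Real.exp_log (by norm_num : (0:ℝ) < 3/2)]; norm_num
  nlinarith

lemma psiB_ge {κ t₀ M₀ : ℝ} (hκ : 0 < κ) (hM₀ : 0 < M₀) (ht₀ : t₀ ∈ Set.Ioo (0:ℝ) 1)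
    {t : ℝ} (h2 : t ≤ t₀) : (3/2)*M₀ ≤ psiB κ t₀ M₀ t := by
  obtain ⟨h01, h02⟩ := ht₀
  unfold psiB
  have ht2 : t₀^2 < 1 := by nlinarith
  have hd : (0:ℝ) < κ*(1-t₀^2) := mul_pos hκ (by linarith)
  have hL : 0 ≤ (κ+2)*t₀/(κ*(1-t₀^2)) := div_nonneg (by nlinarith) hd.le
  nlinarith [Real.one_le_exp (by nlinarith : (0:ℝ) ≤ (κ+2)*t₀/(κ*(1-t₀^2))*(t₀ - t))]

lemma psiB_le {κ t₀ M₀ : ℝ} (hκ : 0 < κ) (hM₀ : 0 < M₀) (ht₀ : t₀ ∈ Set.Ioo (0:ℝ) 1)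
    {t : ℝ} (h1 : 0 ≤ t) : psiB κ t₀ M₀ t ≤ 2 * Real.exp ((κ + 2)/(κ * (1 - t₀^2))) * M₀ := by
  obtain ⟨h01, h02⟩ := ht₀
  unfold psiB
  have ht2 : t₀^2 < 1 := by nlinarith
  have hd : 0 < κ*(1-t₀^2) := mul_pos hκ (by linarith)
  have harg : (κ+2)*t₀/(κ*(1-t₀^2))*(t₀ - t) ≤ (κ + 2)/(κ * (1 - t₀^2)) := by
    rw [div_mul_eq_mul_div, div_le_div_iff₀ hd hd]
    have hk2 : (0:ℝ) < κ + 2 := by linarith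
    have h3 : t₀*(t₀ - t) ≤ 1 := by nlinarith
    nlinarith [mul_le_mul_of_nonneg_right (mul_le_mul_of_nonneg_left h3 hk2.le) hd.le]
  have := Real.exp_le_exp.2 harg
  nlinarith [Real.exp_pos ((κ+2)*t₀/(κ*(1-t₀^2))*(t₀ - t))]

lemma phiB_hasDeriv (t₀ m₀ : ℝ) (t : ℝ) :
    HasDerivAt (phiB t₀ m₀) ((Real.log (3/2)/t₀) * phiB t₀ m₀ t) t := by
  unfold phiB
  have h1 : HasDerivAt (fun t => -(Real.log (3/2)/t₀)*(t₀ - t)) (Real.log (3/2)/t₀) t := by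
    have := ((hasDerivAt_id t).const_sub t₀).const_mul (-(Real.log (3/2)/t₀))
    simpa using this
  have h2 := (h1.exp).const_mul ((3/4)*m₀)
  exact h2.congr_deriv (by ring)

lemma psiB_hasDeriv (κ t₀ M₀ : ℝ) (t : ℝ) :
    HasDerivAt (psiB κ t₀ M₀) (-((κ+2)*t₀/(κ*(1-t₀^2))) * psiB κ t₀ M₀ t) t := by
  unfold psiB
  have h1 : HasDerivAt (fun t => (κ+2)*t₀/(κ*(1-t₀^2))*(t₀ - t)) (-((κ+2)*t₀/(κ*(1-t₀^2)))) t := by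
    have := ((hasDerivAt_id t).const_sub t₀).const_mul ((κ+2)*t₀/(κ*(1-t₀^2)))
    simpa using this
  have h2 := (h1.exp).const_mul ((3/2)*M₀)
  exact h2.congr_deriv (by ring)

lemma phiB_cont (t₀ m₀ : ℝ) : Continuous (phiB t₀ m₀) := by
  unfold phiB; fun_prop

lemma psiB_cont (κ t₀ M₀ : ℝ) : Continuous (psiB κ t₀ M₀) := by
  unfold psiB; fun_prop

def goodPt (κ t₀ m₀ M₀ : ℝ) (Ub Vb : ℝ × ℝ → ℝ) (p : ℝ × ℝ) : Prop :=
  phiB t₀ m₀ p.1 ≤ Ub p ∧ Ub p ≤ psiB κ t₀ M₀ p.1 ∧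
  phiB t₀ m₀ p.1 ≤ Vb p ∧ Vb p ≤ psiB κ t₀ M₀ p.1

lemma good_limit (κ t₀ r₀ : ℝ) (hκ : 0 < κ) (ht₀ : t₀ ∈ Set.Ioo (0:ℝ) 1)
    (rt : ℝ → ℝ) (hrtC1 : ContDiffOn ℝ 1 rt (Set.Icc 0 t₀)) (hrtt0 : rt t₀ = r₀)
    (Ub Vb : ℝ × ℝ → ℝ)
    (hUcont : ContinuousOn Ub (region κ t₀ r₀ rt ∪ {p : ℝ × ℝ | ∃ t ∈ Set.Ioc (0:ℝ) t₀, p = (t, rt t)}))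
    (hVcont : ContinuousOn Vb (region κ t₀ r₀ rt ∪ {p : ℝ × ℝ | ∃ t ∈ Set.Ioc (0:ℝ) t₀, p = (t, rt t)}))
    (m₀ M₀ : ℝ) (hm₀ : 0 < m₀) (hm₀M₀ : m₀ ≤ M₀)
    (hbdry : ∀ t ∈ Set.Ioc (0:ℝ) t₀,
      m₀ ≤ Ub (t, rt t) ∧ Ub (t, rt t) ≤ M₀ ∧ m₀ ≤ Vb (t, rt t) ∧ Vb (t, rt t) ≤ M₀)
    {δ : ℝ} (hδ : 0 < δ) {a : ℝ × ℝ}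
    (ha : a ∈ region κ t₀ r₀ rt) (haδ : a.2 ≤ rcheck κ t₀ r₀ a.1 - δ)
    (habove : ∀ q ∈ region κ t₀ r₀ rt, q.2 ≤ rcheck κ t₀ r₀ q.1 - δ → a.1 < q.1 →
      goodPt κ t₀ m₀ M₀ Ub Vb q) :
    goodPt κ t₀ m₀ M₀ Ub Vb a := by
  obtain ⟨ha1, ha2, ha3, ha4⟩ := ha
  have hM₀ : 0 < M₀ := lt_of_lt_of_le hm₀ hm₀M₀
  rcases eq_or_lt_of_le ha3 with hΓ | hint
  · -- boundary point: use boundary data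
    have haeq : a = (a.1, rt a.1) := Prod.ext rfl hΓ.symm
    obtain ⟨b1, b2, b3, b4⟩ := hbdry a.1 ⟨ha1, ha2⟩
    rw [← haeq] at b1 b2 b3 b4
    have h1 := phiB_le hm₀ ht₀.1 ha2 (m₀ := m₀)
    have h2 := psiB_ge hκ hM₀ ht₀ ha2 (M₀ := M₀)
    exact ⟨by linarith, by linarith, by linarith, by linarith⟩
  · -- interior in r: approach along the forward characteristic
    obtain ⟨ε, hε, hlt, hderiv, hmem⟩ :=
      char_exists κ t₀ r₀ hκ ht₀ rt hrtC1 hrtt0 hδ (Or.inl rfl) ha1 ha2 hint haδ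
    set γ : ℝ → ℝ := fun t => a.2 + 1 * (rcheck κ t₀ r₀ t - rcheck κ t₀ r₀ a.1) with hγdef
    set c : ℝ → ℝ × ℝ := fun t => (t, γ t) with hcdef
    have hIoc : Ioc a.1 (a.1 + ε) ∈ nhdsWithin a.1 (Ioi a.1) :=
      Ioc_mem_nhdsGT_of_mem ⟨le_rfl, by linarith⟩
    -- tendsto of rcheck from the right
    have hrc : Filter.Tendsto (rcheck κ t₀ r₀) (nhdsWithin a.1 (Ioi a.1))
        (nhds (rcheck κ t₀ r₀ a.1)) := by
      have h1 : ContinuousWithinAt (rcheck κ t₀ r₀) (Icc 0 t₀) a.1 :=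
        (rcheck_contOn κ t₀ r₀ hκ ht₀) a.1 ⟨ha1.le, ha2⟩
      apply h1.mono_left
      rw [nhdsWithin_le_iff]
      exact mem_of_superset hIoc (fun x hx => ⟨(ha1.trans hx.1).le, hx.2.trans (by linarith [(hmem (a.1+ε) ⟨by linarith, le_rfl⟩).2.1])⟩)
    have hctend : Filter.Tendsto c (nhdsWithin a.1 (Ioi a.1)) (nhds a) := by
      have h1 : Filter.Tendsto (fun t : ℝ => t) (nhdsWithin a.1 (Ioi a.1)) (nhds a.1) :=
        tendsto_id.mono_left nhdsWithin_le_nhds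
      have h2 : Filter.Tendsto γ (nhdsWithin a.1 (Ioi a.1)) (nhds a.2) := by
        have h4 := ((hrc.sub_const (rcheck κ t₀ r₀ a.1)).const_mul 1).const_add a.2
        rw [show a.2 + 1 * (rcheck κ t₀ r₀ a.1 - rcheck κ t₀ r₀ a.1) = a.2 by ring] at h4
        exact h4
      have h3 := h1.prodMk_nhds h2
      rw [Prod.mk.eta] at h3
      exact h3
    have hcreg : ∀ᶠ t in nhdsWithin a.1 (Ioi a.1), c t ∈ region κ t₀ r₀ rt ∧
        (c t).2 ≤ rcheck κ t₀ r₀ (c t).1 - δ ∧ a.1 < t := by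
      filter_upwards [hIoc] with t ht
      obtain ⟨k1, k2, k3, k4⟩ := hmem t ⟨ht.1.le, ht.2⟩
      exact ⟨⟨k1, k2, k3.le, k4.trans (by linarith)⟩, k4, ht.1⟩
    have hcregion : Filter.Tendsto c (nhdsWithin a.1 (Ioi a.1))
        (nhdsWithin a (region κ t₀ r₀ rt)) :=
      tendsto_nhdsWithin_iff.2 ⟨hctend, hcreg.mono (fun t ht => ht.1)⟩
    have hUa : Filter.Tendsto (fun t => Ub (c t)) (nhdsWithin a.1 (Ioi a.1)) (nhds (Ub a)) :=
      ((hUcont.mono subset_union_left) a ⟨ha1, ha2, ha3, ha4⟩).tendsto.comp hcregion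
    have hVa : Filter.Tendsto (fun t => Vb (c t)) (nhdsWithin a.1 (Ioi a.1)) (nhds (Vb a)) :=
      ((hVcont.mono subset_union_left) a ⟨ha1, ha2, ha3, ha4⟩).tendsto.comp hcregion
    have hψ : Filter.Tendsto (fun t => psiB κ t₀ M₀ t) (nhdsWithin a.1 (Ioi a.1))
        (nhds (psiB κ t₀ M₀ a.1)) :=
      (psiB_cont κ t₀ M₀).continuousAt.tendsto.comp (tendsto_id.mono_left nhdsWithin_le_nhds)
    have hφ : Filter.Tendsto (fun t => phiB t₀ m₀ t) (nhdsWithin a.1 (Ioi a.1))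
        (nhds (phiB t₀ m₀ a.1)) :=
      (phiB_cont t₀ m₀).continuousAt.tendsto.comp (tendsto_id.mono_left nhdsWithin_le_nhds)
    have hgood : ∀ᶠ t in nhdsWithin a.1 (Ioi a.1), goodPt κ t₀ m₀ M₀ Ub Vb (c t) := by
      filter_upwards [hcreg] with t ⟨h1, h2, h3⟩
      exact habove (c t) h1 h2 h3
    refine ⟨?_, ?_, ?_, ?_⟩
    · exact le_of_tendsto_of_tendsto hφ hUa (hgood.mono (fun t ht => ht.1))
    · exact le_of_tendsto_of_tendsto hUa hψ (hgood.mono (fun t ht => ht.2.1))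
    · exact le_of_tendsto_of_tendsto hφ hVa (hgood.mono (fun t ht => ht.2.2.1))
    · exact le_of_tendsto_of_tendsto hVa hψ (hgood.mono (fun t ht => ht.2.2.2))

lemma contact_contra (κ t₀ r₀ : ℝ) (hκ : 0 < κ) (ht₀ : t₀ ∈ Set.Ioo (0:ℝ) 1)
    (rt : ℝ → ℝ) (hrtC1 : ContDiffOn ℝ 1 rt (Set.Icc 0 t₀)) (hrtt0 : rt t₀ = r₀)
    (Ub Vb : ℝ × ℝ → ℝ)
    (hUC1 : ContDiffOn ℝ 1 Ub (region κ t₀ r₀ rt))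
    (hVC1 : ContDiffOn ℝ 1 Vb (region κ t₀ r₀ rt))
    (hsys : Sys38 κ Ub Vb (region κ t₀ r₀ rt))
    (m₀ M₀ : ℝ) (hm₀ : 0 < m₀) (hm₀M₀ : m₀ ≤ M₀)
    (hbdry : ∀ t ∈ Set.Ioc (0:ℝ) t₀,
      m₀ ≤ Ub (t, rt t) ∧ Ub (t, rt t) ≤ M₀ ∧ m₀ ≤ Vb (t, rt t) ∧ Vb (t, rt t) ≤ M₀)
    {δ : ℝ} (hδ : 0 < δ) {a : ℝ × ℝ}
    (ha : a ∈ region κ t₀ r₀ rt) (haδ : a.2 ≤ rcheck κ t₀ r₀ a.1 - δ)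
    (hgood : goodPt κ t₀ m₀ M₀ Ub Vb a)
    (habove : ∀ q ∈ region κ t₀ r₀ rt, q.2 ≤ rcheck κ t₀ r₀ q.1 - δ → a.1 < q.1 →
      goodPt κ t₀ m₀ M₀ Ub Vb q)
    (hviol : psiB κ t₀ M₀ a.1 ≤ Ub a ∨ psiB κ t₀ M₀ a.1 ≤ Vb a ∨
      Ub a ≤ phiB t₀ m₀ a.1 ∨ Vb a ≤ phiB t₀ m₀ a.1) : False := by
  obtain ⟨ha1, ha2, ha3, ha4⟩ := ha
  have hM₀ : 0 < M₀ := lt_of_lt_of_le hm₀ hm₀M₀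
  rcases eq_or_lt_of_le ha3 with hΓ | hint
  · -- boundary point: data contradicts the barrier values
    have haeq : a = (a.1, rt a.1) := Prod.ext rfl hΓ.symm
    obtain ⟨b1, b2, b3, b4⟩ := hbdry a.1 ⟨ha1, ha2⟩
    rw [← haeq] at b1 b2 b3 b4
    have h1 := phiB_le hm₀ ht₀.1 ha2 (m₀ := m₀)
    have h2 := psiB_ge hκ hM₀ ht₀ ha2 (M₀ := M₀)
    rcases hviol with h | h | h | h <;> linarith
  · -- interior contact point
    have hlt : a.1 < t₀ := by
      rcases eq_or_lt_of_le ha2 with h | h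
      · exfalso
        rw [h] at haδ hint
        rw [rcheck_t₀, ← hrtt0] at haδ
        linarith
      · exact h
    have hn : region κ t₀ r₀ rt ∈ nhds a :=
      region_mem_nhds κ t₀ r₀ hκ ht₀ rt hrtC1 ha1 hlt hint (by linarith)
    have hdiffU : DifferentiableAt ℝ Ub a := (hUC1.contDiffAt hn).differentiableAt one_ne_zero
    have hdiffV : DifferentiableAt ℝ Vb a := (hVC1.contDiffAt hn).differentiableAt one_ne_zero
    obtain ⟨eq1, eq2⟩ := hsys a ⟨ha1, ha2, ha3, ha4⟩
    obtain ⟨hF, hC1, hC2, hC2L⟩ := coeff_bound κ t₀ hκ ht₀ ha1 ha2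
    have hψpos := psiB_pos (κ := κ) (t₀ := t₀) hM₀ a.1
    have hφpos := phiB_pos (t₀ := t₀) hm₀ a.1
    have hℓpos : 0 < Real.log (3/2) / t₀ := div_pos (Real.log_pos (by norm_num)) ht₀.1
    rcases hviol with hv | hv | hv | hv
    · -- Ub hits the upper barrier: positive characteristic
      have hEq : Ub a = psiB κ t₀ M₀ a.1 := le_antisymm hgood.2.1 hv
      obtain ⟨ε, hε, -, hderiv, hmem⟩ :=
        char_exists κ t₀ r₀ hκ ht₀ rt hrtC1 hrtt0 hδ (Or.inl rfl) ha1 ha2 hint haδ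
      have hγa : a.2 + 1 * (rcheck κ t₀ r₀ a.1 - rcheck κ t₀ r₀ a.1) = a.2 := by ring
      have hDU := deriv_along Ub hdiffU hderiv hγa
      have hw := hDU.sub (psiB_hasDeriv κ t₀ M₀ a.1)
      have hUV : 0 ≤ Ub a - Vb a := by
        have := hgood.2.2.2; rw [hEq]; linarith
      have key : 0 < pdt Ub a + 1 * lam κ a.1 * pdr Ub a -
          (-((κ+2)*t₀/(κ*(1-t₀^2))) * psiB κ t₀ M₀ a.1) := by
        rw [one_mul, eq1]
        have d1 : 0 ≤ (Ub a - Vb a) / (2 * a.1) := div_nonneg hUV (by linarith)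
        have d2 : 0 ≤ (κ + 2 - a.1^2) * a.1 / (2*((1 - a.1^2) * (κ + 1 - a.1^2))) * (Ub a - Vb a) :=
          mul_nonneg hC1 hUV
        have d3 : (κ + 2 - 2*a.1^2) * a.1 / ((1 - a.1^2) * (κ + 1 - a.1^2)) * Ub a <
            (κ+2)*t₀/(κ*(1-t₀^2)) * psiB κ t₀ M₀ a.1 := by
          rw [hEq]
          exact mul_lt_mul_of_pos_right hC2L hψpos
        linarith
      have h0 : Ub (a.1, a.2 + 1 * (rcheck κ t₀ r₀ a.1 - rcheck κ t₀ r₀ a.1)) -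
          psiB κ t₀ M₀ a.1 = 0 := by
        rw [hγa, Prod.mk.eta, hEq]; ring
      refine no_pos_deriv hw key h0 hε ?_
      intro t ht
      obtain ⟨k1, k2, k3, k4⟩ := hmem t ⟨ht.1.le, ht.2⟩
      have hg := habove (t, a.2 + 1 * (rcheck κ t₀ r₀ t - rcheck κ t₀ r₀ a.1))
        ⟨k1, k2, k3.le, k4.trans (by linarith)⟩ k4 ht.1
      have hb : Ub (t, a.2 + 1 * (rcheck κ t₀ r₀ t - rcheck κ t₀ r₀ a.1)) ≤ psiB κ t₀ M₀ t :=
        hg.2.1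
      simp only [Pi.sub_apply, sub_nonpos]
      exact hb
    · -- Vb hits the upper barrier: negative characteristic
      have hEq : Vb a = psiB κ t₀ M₀ a.1 := le_antisymm hgood.2.2.2 hv
      obtain ⟨ε, hε, -, hderiv, hmem⟩ :=
        char_exists κ t₀ r₀ hκ ht₀ rt hrtC1 hrtt0 hδ (Or.inr rfl) ha1 ha2 hint haδ
      have hγa : a.2 + (-1) * (rcheck κ t₀ r₀ a.1 - rcheck κ t₀ r₀ a.1) = a.2 := by ring
      have hDV := deriv_along Vb hdiffV hderiv hγa
      have hw := hDV.sub (psiB_hasDeriv κ t₀ M₀ a.1)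
      have hVU : 0 ≤ Vb a - Ub a := by
        have := hgood.2.1; rw [hEq]; linarith
      have key : 0 < pdt Vb a + (-1) * lam κ a.1 * pdr Vb a -
          (-((κ+2)*t₀/(κ*(1-t₀^2))) * psiB κ t₀ M₀ a.1) := by
        have hrw : pdt Vb a + (-1) * lam κ a.1 * pdr Vb a =
            pdt Vb a - lam κ a.1 * pdr Vb a := by ring
        rw [hrw, eq2]
        have d1 : 0 ≤ (Vb a - Ub a) / (2 * a.1) := div_nonneg hVU (by linarith)
        have d2 : (κ + 2 - a.1^2) * a.1 / (2*((1 - a.1^2) * (κ + 1 - a.1^2))) * (Ub a - Vb a) ≤ 0 :=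
          mul_nonpos_of_nonneg_of_nonpos hC1 (by linarith)
        have d3 : (κ + 2 - 2*a.1^2) * a.1 / ((1 - a.1^2) * (κ + 1 - a.1^2)) * Vb a <
            (κ+2)*t₀/(κ*(1-t₀^2)) * psiB κ t₀ M₀ a.1 := by
          rw [hEq]
          exact mul_lt_mul_of_pos_right hC2L hψpos
        linarith
      have h0 : Vb (a.1, a.2 + (-1) * (rcheck κ t₀ r₀ a.1 - rcheck κ t₀ r₀ a.1)) -
          psiB κ t₀ M₀ a.1 = 0 := by
        rw [hγa, Prod.mk.eta, hEq]; ring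
      refine no_pos_deriv hw key h0 hε ?_
      intro t ht
      obtain ⟨k1, k2, k3, k4⟩ := hmem t ⟨ht.1.le, ht.2⟩
      have hg := habove (t, a.2 + (-1) * (rcheck κ t₀ r₀ t - rcheck κ t₀ r₀ a.1))
        ⟨k1, k2, k3.le, k4.trans (by linarith)⟩ k4 ht.1
      have hb : Vb (t, a.2 + (-1) * (rcheck κ t₀ r₀ t - rcheck κ t₀ r₀ a.1)) ≤ psiB κ t₀ M₀ t :=
        hg.2.2.2
      simp only [Pi.sub_apply, sub_nonpos]
      exact hb
    · -- Ub hits the lower barrier: positive characteristic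
      have hEq : Ub a = phiB t₀ m₀ a.1 := le_antisymm hv hgood.1
      obtain ⟨ε, hε, -, hderiv, hmem⟩ :=
        char_exists κ t₀ r₀ hκ ht₀ rt hrtC1 hrtt0 hδ (Or.inl rfl) ha1 ha2 hint haδ
      have hγa : a.2 + 1 * (rcheck κ t₀ r₀ a.1 - rcheck κ t₀ r₀ a.1) = a.2 := by ring
      have hDU := deriv_along Ub hdiffU hderiv hγa
      have hw := hDU.sub (phiB_hasDeriv t₀ m₀ a.1)
      have hUV : Ub a - Vb a ≤ 0 := by
        have := hgood.2.2.1; rw [hEq]; linarith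
      have key : pdt Ub a + 1 * lam κ a.1 * pdr Ub a -
          (Real.log (3/2)/t₀ * phiB t₀ m₀ a.1) < 0 := by
        rw [one_mul, eq1]
        have d1 : (Ub a - Vb a) / (2 * a.1) ≤ 0 :=
          div_nonpos_of_nonpos_of_nonneg hUV (by linarith)
        have d2 : (κ + 2 - a.1^2) * a.1 / (2*((1 - a.1^2) * (κ + 1 - a.1^2))) * (Ub a - Vb a) ≤ 0 :=
          mul_nonpos_of_nonneg_of_nonpos hC1 hUV
        have d3 : 0 < (κ + 2 - 2*a.1^2) * a.1 / ((1 - a.1^2) * (κ + 1 - a.1^2)) * Ub a := by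
          rw [hEq]; exact mul_pos hC2 hφpos
        have d4 : 0 < Real.log (3/2)/t₀ * phiB t₀ m₀ a.1 := mul_pos hℓpos hφpos
        linarith
      have h0 : Ub (a.1, a.2 + 1 * (rcheck κ t₀ r₀ a.1 - rcheck κ t₀ r₀ a.1)) -
          phiB t₀ m₀ a.1 = 0 := by
        rw [hγa, Prod.mk.eta, hEq]; ring
      refine no_neg_deriv hw key h0 hε ?_
      intro t ht
      obtain ⟨k1, k2, k3, k4⟩ := hmem t ⟨ht.1.le, ht.2⟩
      have hg := habove (t, a.2 + 1 * (rcheck κ t₀ r₀ t - rcheck κ t₀ r₀ a.1))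
        ⟨k1, k2, k3.le, k4.trans (by linarith)⟩ k4 ht.1
      have hb : phiB t₀ m₀ t ≤ Ub (t, a.2 + 1 * (rcheck κ t₀ r₀ t - rcheck κ t₀ r₀ a.1)) :=
        hg.1
      simp only [Pi.sub_apply, sub_nonneg]
      exact hb
    · -- Vb hits the lower barrier: negative characteristic
      have hEq : Vb a = phiB t₀ m₀ a.1 := le_antisymm hv hgood.2.2.1
      obtain ⟨ε, hε, -, hderiv, hmem⟩ :=
        char_exists κ t₀ r₀ hκ ht₀ rt hrtC1 hrtt0 hδ (Or.inr rfl) ha1 ha2 hint haδ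
      have hγa : a.2 + (-1) * (rcheck κ t₀ r₀ a.1 - rcheck κ t₀ r₀ a.1) = a.2 := by ring
      have hDV := deriv_along Vb hdiffV hderiv hγa
      have hw := hDV.sub (phiB_hasDeriv t₀ m₀ a.1)
      have hVU : Vb a - Ub a ≤ 0 := by
        have := hgood.1; rw [hEq]; linarith
      have key : pdt Vb a + (-1) * lam κ a.1 * pdr Vb a -
          (Real.log (3/2)/t₀ * phiB t₀ m₀ a.1) < 0 := by
        have hrw : pdt Vb a + (-1) * lam κ a.1 * pdr Vb a =
            pdt Vb a - lam κ a.1 * pdr Vb a := by ring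
        rw [hrw, eq2]
        have d1 : (Vb a - Ub a) / (2 * a.1) ≤ 0 :=
          div_nonpos_of_nonpos_of_nonneg hVU (by linarith)
        have d2 : 0 ≤ (κ + 2 - a.1^2) * a.1 / (2*((1 - a.1^2) * (κ + 1 - a.1^2))) * (Ub a - Vb a) :=
          mul_nonneg hC1 (by linarith)
        have d3 : 0 < (κ + 2 - 2*a.1^2) * a.1 / ((1 - a.1^2) * (κ + 1 - a.1^2)) * Vb a := by
          rw [hEq]; exact mul_pos hC2 hφpos
        have d4 : 0 < Real.log (3/2)/t₀ * phiB t₀ m₀ a.1 := mul_pos hℓpos hφpos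
        linarith
      have h0 : Vb (a.1, a.2 + (-1) * (rcheck κ t₀ r₀ a.1 - rcheck κ t₀ r₀ a.1)) -
          phiB t₀ m₀ a.1 = 0 := by
        rw [hγa, Prod.mk.eta, hEq]; ring
      refine no_neg_deriv hw key h0 hε ?_
      intro t ht
      obtain ⟨k1, k2, k3, k4⟩ := hmem t ⟨ht.1.le, ht.2⟩
      have hg := habove (t, a.2 + (-1) * (rcheck κ t₀ r₀ t - rcheck κ t₀ r₀ a.1))
        ⟨k1, k2, k3.le, k4.trans (by linarith)⟩ k4 ht.1
      have hb : phiB t₀ m₀ t ≤ Vb (t, a.2 + (-1) * (rcheck κ t₀ r₀ t - rcheck κ t₀ r₀ a.1)) :=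
        hg.2.2.1
      simp only [Pi.sub_apply, sub_nonneg]
      exact hb

lemma main_bound (κ t₀ r₀ : ℝ) (hκ : 0 < κ) (ht₀ : t₀ ∈ Set.Ioo (0:ℝ) 1)
    (hr₀ : 0 < r₀) (rt : ℝ → ℝ)
    (hrtC1 : ContDiffOn ℝ 1 rt (Set.Icc 0 t₀))
    (hrtmono : StrictMonoOn rt (Set.Icc 0 t₀))
    (hrt0 : rt 0 = 0) (hrtt0 : rt t₀ = r₀)
    (Ub Vb : ℝ × ℝ → ℝ)
    (hUC1 : ContDiffOn ℝ 1 Ub (region κ t₀ r₀ rt))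
    (hVC1 : ContDiffOn ℝ 1 Vb (region κ t₀ r₀ rt))
    (hsys : Sys38 κ Ub Vb (region κ t₀ r₀ rt))
    (hUcont : ContinuousOn Ub (region κ t₀ r₀ rt ∪ {p : ℝ × ℝ | ∃ t ∈ Set.Ioc (0:ℝ) t₀, p = (t, rt t)}))
    (hVcont : ContinuousOn Vb (region κ t₀ r₀ rt ∪ {p : ℝ × ℝ | ∃ t ∈ Set.Ioc (0:ℝ) t₀, p = (t, rt t)}))
    (m₀ M₀ : ℝ) (hm₀ : 0 < m₀) (hm₀M₀ : m₀ ≤ M₀)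
    (hbdry : ∀ t ∈ Set.Ioc (0:ℝ) t₀,
      m₀ ≤ Ub (t, rt t) ∧ Ub (t, rt t) ≤ M₀ ∧ m₀ ≤ Vb (t, rt t) ∧ Vb (t, rt t) ≤ M₀)
    {δ : ℝ} (hδ : 0 < δ) :
    ∀ p ∈ region κ t₀ r₀ rt, p.2 ≤ rcheck κ t₀ r₀ p.1 - δ → goodPt κ t₀ m₀ M₀ Ub Vb p := by
  classical
  by_contra hcon
  push_neg at hcon
  obtain ⟨p₀, hp₀, hp₀δ, hbad₀⟩ := hcon
  set BAD : Set (ℝ × ℝ) := {q | q ∈ region κ t₀ r₀ rt ∧ q.2 ≤ rcheck κ t₀ r₀ q.1 - δ ∧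
    ¬ goodPt κ t₀ m₀ M₀ Ub Vb q} with hBAD
  have hp₀BAD : p₀ ∈ BAD := ⟨hp₀, hp₀δ, hbad₀⟩
  have hne : (Prod.fst '' BAD).Nonempty := ⟨p₀.1, p₀, hp₀BAD, rfl⟩
  have hbdd : BddAbove (Prod.fst '' BAD) := by
    refine ⟨t₀, ?_⟩
    rintro x ⟨q, hq, rfl⟩
    exact hq.1.2.1
  set T := sSup (Prod.fst '' BAD) with hT
  have hTpos : 0 < T := lt_of_lt_of_le hp₀.1 (le_csSup hbdd ⟨p₀, hp₀BAD, rfl⟩)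
  have hTle : T ≤ t₀ := csSup_le hne (by rintro x ⟨q, hq, rfl⟩; exact hq.1.2.1)
  have habove : ∀ q ∈ region κ t₀ r₀ rt, q.2 ≤ rcheck κ t₀ r₀ q.1 - δ → T < q.1 →
      goodPt κ t₀ m₀ M₀ Ub Vb q := by
    intro q h1 h2 h3
    by_contra hng
    exact absurd (le_csSup hbdd ⟨q, ⟨h1, h2, hng⟩, rfl⟩) (not_le.2 h3)
  -- a sequence of bad points with first coordinates converging to T
  have hseq : ∀ n : ℕ, ∃ q, q ∈ BAD ∧ T - min (1/((n:ℝ)+1)) (T/2) < q.1 := by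
    intro n
    have hmin : 0 < min (1/((n:ℝ)+1)) (T/2) := lt_min (by positivity) (by linarith)
    obtain ⟨x, ⟨q, hq, rfl⟩, hx⟩ := exists_lt_of_lt_csSup hne (by linarith : T - min (1/((n:ℝ)+1)) (T/2) < T)
    exact ⟨q, hq, hx⟩
  choose qn hqnBAD hqnlt using hseq
  have hqnle : ∀ n, (qn n).1 ≤ T := fun n => le_csSup hbdd ⟨qn n, hqnBAD n, rfl⟩
  have hqnK : ∀ n, qn n ∈ {q : ℝ × ℝ | q.1 ∈ Icc (T/2) t₀ ∧ q.2 ∈ Icc 0 r₀ ∧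
      rt q.1 ≤ q.2 ∧ q.2 ≤ rcheck κ t₀ r₀ q.1 - δ} := by
    intro n
    obtain ⟨⟨k1, k2, k3, k4⟩, k5, -⟩ := hqnBAD n
    have hmin2 : min (1/((n:ℝ)+1)) (T/2) ≤ T/2 := min_le_right _ _
    have hr1 : 0 ≤ (qn n).2 := by
      have h0 : rt 0 ≤ rt (qn n).1 := by
        rcases eq_or_lt_of_le (le_of_lt k1) with h | h
        · rw [← h]
        · exact (hrtmono ⟨le_rfl, ht₀.1.le⟩ ⟨k1.le, k2⟩ h).le
      rw [hrt0] at h0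
      linarith
    have hr2 : (qn n).2 ≤ r₀ := by
      have := rcheck_mono κ t₀ r₀ hκ ht₀ ⟨k1.le, k2⟩ ⟨ht₀.1.le, le_rfl⟩ k2
      rw [rcheck_t₀] at this
      linarith
    exact ⟨⟨by have := hqnlt n; linarith, k2⟩, ⟨hr1, hr2⟩, k3, k5⟩
  obtain ⟨A, hAK, χ, hχ, htend⟩ :=
    (Kcpt κ t₀ r₀ hκ ht₀ rt hrtC1 (by linarith : 0 < T/2)).tendsto_subseq hqnK
  obtain ⟨hA1, hA2, hA3, hA4⟩ := hAK
  -- A.1 = T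
  have hfst : Filter.Tendsto (fun n => (qn (χ n)).1) atTop (nhds A.1) :=
    ((continuous_fst.tendsto A).comp htend)
  have hlow : Filter.Tendsto (fun n : ℕ => T - 1/((n:ℝ)+1)) atTop (nhds T) := by
    have := tendsto_one_div_add_atTop_nhds_zero_nat (𝕜 := ℝ)
    have h2 := Filter.Tendsto.const_sub T this
    simpa using h2
  have hA1T : A.1 = T := by
    have hle : ∀ n : ℕ, T - 1/((n:ℝ)+1) ≤ (qn (χ n)).1 := by
      intro n
      have h1 := hqnlt (χ n)
      have h2 : 1/((χ n : ℝ)+1) ≤ 1/((n:ℝ)+1) := by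
        apply one_div_le_one_div_of_le (by positivity)
        have hnn : (n:ℝ) ≤ (χ n : ℝ) := Nat.cast_le.2 hχ.le_apply
        linarith
      have h3 : min (1/((χ n : ℝ)+1)) (T/2) ≤ 1/((χ n : ℝ)+1) := min_le_left _ _
      linarith
    have hge : ∀ n : ℕ, (qn (χ n)).1 ≤ T := fun n => hqnle (χ n)
    have := tendsto_of_tendsto_of_tendsto_of_le_of_le hlow tendsto_const_nhds hle hge
    exact tendsto_nhds_unique hfst this
  have hAreg : A ∈ region κ t₀ r₀ rt :=
    ⟨by rw [hA1T]; exact hTpos, hA1.2, hA3, by linarith⟩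
  -- limit of the violation function
  set Wf : ℝ × ℝ → ℝ := fun q => max (Ub q - psiB κ t₀ M₀ q.1)
    (max (Vb q - psiB κ t₀ M₀ q.1) (max (phiB t₀ m₀ q.1 - Ub q) (phiB t₀ m₀ q.1 - Vb q))) with hWf
  have hWpos : ∀ n, 0 < Wf (qn (χ n)) := by
    intro n
    obtain ⟨hreg, hδ', hng⟩ := hqnBAD (χ n)
    by_contra hle
    push_neg at hle
    apply hng
    simp only [hWf, max_le_iff] at hle
    obtain ⟨w1, w2, w3, w4⟩ := hle
    exact ⟨by linarith, by linarith, by linarith, by linarith⟩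
  have hreg : ∀ n, qn (χ n) ∈ region κ t₀ r₀ rt := fun n => (hqnBAD (χ n)).1
  have htendreg : Filter.Tendsto (fun n => qn (χ n)) atTop
      (nhdsWithin A (region κ t₀ r₀ rt)) :=
    tendsto_nhdsWithin_iff.2 ⟨htend, Filter.Eventually.of_forall hreg⟩
  have hUA : Filter.Tendsto (fun n => Ub (qn (χ n))) atTop (nhds (Ub A)) :=
    ((hUcont.mono subset_union_left) A hAreg).tendsto.comp htendreg
  have hVA : Filter.Tendsto (fun n => Vb (qn (χ n))) atTop (nhds (Vb A)) :=
    ((hVcont.mono subset_union_left) A hAreg).tendsto.comp htendreg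
  have hψA : Filter.Tendsto (fun n => psiB κ t₀ M₀ (qn (χ n)).1) atTop
      (nhds (psiB κ t₀ M₀ A.1)) :=
    ((psiB_cont κ t₀ M₀).continuousAt.tendsto).comp hfst
  have hφA : Filter.Tendsto (fun n => phiB t₀ m₀ (qn (χ n)).1) atTop
      (nhds (phiB t₀ m₀ A.1)) :=
    ((phiB_cont t₀ m₀).continuousAt.tendsto).comp hfst
  have hWtend : Filter.Tendsto (fun n => Wf (qn (χ n))) atTop (nhds (Wf A)) := by
    simp only [hWf]
    exact (hUA.sub hψA).max ((hVA.sub hψA).max ((hφA.sub hUA).max (hφA.sub hVA)))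
  have hWA : 0 ≤ Wf A :=
    ge_of_tendsto hWtend (Filter.Eventually.of_forall (fun n => (hWpos n).le))
  have hviol : psiB κ t₀ M₀ A.1 ≤ Ub A ∨ psiB κ t₀ M₀ A.1 ≤ Vb A ∨
      Ub A ≤ phiB t₀ m₀ A.1 ∨ Vb A ≤ phiB t₀ m₀ A.1 := by
    simp only [hWf, le_max_iff] at hWA
    rcases hWA with h | h | h | h
    · exact Or.inl (by linarith)
    · exact Or.inr (Or.inl (by linarith))
    · exact Or.inr (Or.inr (Or.inl (by linarith)))
    · exact Or.inr (Or.inr (Or.inr (by linarith)))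
  have habove' : ∀ q ∈ region κ t₀ r₀ rt, q.2 ≤ rcheck κ t₀ r₀ q.1 - δ → A.1 < q.1 →
      goodPt κ t₀ m₀ M₀ Ub Vb q := by
    rw [hA1T]; exact habove
  have hgoodA : goodPt κ t₀ m₀ M₀ Ub Vb A :=
    good_limit κ t₀ r₀ hκ ht₀ rt hrtC1 hrtt0 Ub Vb hUcont hVcont m₀ M₀ hm₀ hm₀M₀ hbdry
      hδ hAreg (by linarith) habove'
  exact contact_contra κ t₀ r₀ hκ ht₀ rt hrtC1 hrtt0 Ub Vb hUC1 hVC1 hsys m₀ M₀ hm₀ hm₀M₀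
    hbdry hδ hAreg (by linarith) hgoodA habove' hviol


/-- Lemma 3.2 (uniform two-sided bounds). -/
theorem stmt_4 (κ t₀ r₀ : ℝ) (hκ : 0 < κ) (ht₀ : t₀ ∈ Set.Ioo (0:ℝ) 1)
    (hr₀ : 0 < r₀) (rt : ℝ → ℝ)
    (hrtC1 : ContDiffOn ℝ 1 rt (Set.Icc 0 t₀))
    (hrtmono : StrictMonoOn rt (Set.Icc 0 t₀))
    (hrt0 : rt 0 = 0) (hrtt0 : rt t₀ = r₀)
    (hspace : ∀ t ∈ Set.Ioc (0:ℝ) t₀, lam κ t < deriv rt t)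
    (Ub Vb : ℝ × ℝ → ℝ)
    (hUC1 : ContDiffOn ℝ 1 Ub (region κ t₀ r₀ rt))
    (hVC1 : ContDiffOn ℝ 1 Vb (region κ t₀ r₀ rt))
    (hsys : Sys38 κ Ub Vb (region κ t₀ r₀ rt))
    (hUcont : ContinuousOn Ub (region κ t₀ r₀ rt ∪ {p : ℝ × ℝ | ∃ t ∈ Set.Ioc (0:ℝ) t₀, p = (t, rt t)}))
    (hVcont : ContinuousOn Vb (region κ t₀ r₀ rt ∪ {p : ℝ × ℝ | ∃ t ∈ Set.Ioc (0:ℝ) t₀, p = (t, rt t)}))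
    (m₀ M₀ : ℝ) (hm₀ : 0 < m₀) (hm₀M₀ : m₀ ≤ M₀)
    (hbdry : ∀ t ∈ Set.Ioc (0:ℝ) t₀,
      m₀ ≤ Ub (t, rt t) ∧ Ub (t, rt t) ≤ M₀ ∧ m₀ ≤ Vb (t, rt t) ∧ Vb (t, rt t) ≤ M₀)
    (k₀ : ℝ) (hk₀ : k₀ = (κ + 2)/(κ * (1 - t₀^2))) :
    ∀ p ∈ region κ t₀ r₀ rt,
      (1/2) * m₀ ≤ Ub p ∧ Ub p ≤ 2 * Real.exp k₀ * M₀ ∧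
      (1/2) * m₀ ≤ Vb p ∧ Vb p ≤ 2 * Real.exp k₀ * M₀ := by
  have hM₀ : 0 < M₀ := lt_of_lt_of_le hm₀ hm₀M₀
  -- goodPt implies the desired bounds
  have hconv : ∀ q : ℝ × ℝ, 0 ≤ q.1 → q.1 ≤ t₀ → goodPt κ t₀ m₀ M₀ Ub Vb q →
      (1/2) * m₀ ≤ Ub q ∧ Ub q ≤ 2 * Real.exp k₀ * M₀ ∧
      (1/2) * m₀ ≤ Vb q ∧ Vb q ≤ 2 * Real.exp k₀ * M₀ := by
    intro q hq0 hqt hg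
    have h1 := half_le_phiB (t₀ := t₀) hm₀ ht₀.1 hq0
    have h2 := psiB_le (κ := κ) hκ hM₀ ht₀ hq0 (M₀ := M₀)
    rw [← hk₀] at h2
    obtain ⟨g1, g2, g3, g4⟩ := hg
    refine ⟨by linarith, by linarith, by linarith, by linarith⟩
  intro p hp
  obtain ⟨hp1, hp2, hp3, hp4⟩ := hp
  rcases lt_or_eq_of_le hp4 with hlt | heq
  · -- p is strictly below the upper characteristic
    have := main_bound κ t₀ r₀ hκ ht₀ hr₀ rt hrtC1 hrtmono hrt0 hrtt0 Ub Vb hUC1 hVC1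
      hsys hUcont hVcont m₀ M₀ hm₀ hm₀M₀ hbdry (by linarith : (0:ℝ) < rcheck κ t₀ r₀ p.1 - p.2)
      p ⟨hp1, hp2, hp3, hp4⟩ (by linarith)
    exact hconv p hp1.le hp2 this
  · -- p on the upper characteristic
    rcases eq_or_lt_of_le hp3 with hΓ | hint
    · -- boundary point
      have haeq : p = (p.1, rt p.1) := Prod.ext rfl hΓ.symm
      obtain ⟨b1, b2, b3, b4⟩ := hbdry p.1 ⟨hp1, hp2⟩
      rw [← haeq] at b1 b2 b3 b4
      have hk₀pos : 0 < k₀ := by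
        rw [hk₀]
        apply div_pos (by linarith)
        have h1 := ht₀.1; have h2 := ht₀.2
        have h3 : t₀^2 < 1 := by nlinarith
        exact mul_pos hκ (by linarith)
      have he : 1 ≤ Real.exp k₀ := Real.one_le_exp hk₀pos.le
      refine ⟨by linarith, by nlinarith, by linarith, by nlinarith⟩
    · -- approach horizontally from the left
      set c : ℝ → ℝ × ℝ := fun ε => (p.1, p.2 - ε) with hc
      have hIoc : Set.Ioc (0:ℝ) (p.2 - rt p.1) ∈ nhdsWithin (0:ℝ) (Set.Ioi 0) :=
        Ioc_mem_nhdsGT_of_mem ⟨le_rfl, by linarith⟩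
      have hctend : Filter.Tendsto c (nhdsWithin 0 (Set.Ioi 0)) (nhds p) := by
        have h1 : Filter.Tendsto (fun ε : ℝ => p.2 - ε) (nhdsWithin 0 (Set.Ioi 0)) (nhds p.2) := by
          have := Filter.Tendsto.const_sub p.2
            (tendsto_id.mono_left (nhdsWithin_le_nhds (a := (0:ℝ)) (s := Set.Ioi 0)))
          simpa using this
        have h2 := (tendsto_const_nhds (x := p.1)
          (f := nhdsWithin (0:ℝ) (Set.Ioi 0))).prodMk_nhds h1
        rw [Prod.mk.eta] at h2
        exact h2
      have hcmem : ∀ᶠ ε in nhdsWithin (0:ℝ) (Set.Ioi 0),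
          c ε ∈ region κ t₀ r₀ rt ∧ (c ε).2 ≤ rcheck κ t₀ r₀ (c ε).1 - ε := by
        filter_upwards [hIoc] with ε hε
        refine ⟨⟨hp1, hp2, show rt p.1 ≤ p.2 - ε by linarith [hε.2], ?_⟩, ?_⟩
        · show p.2 - ε ≤ rcheck κ t₀ r₀ p.1
          have := hε.1; linarith
        · show p.2 - ε ≤ rcheck κ t₀ r₀ p.1 - ε
          linarith
      have hgood : ∀ᶠ ε in nhdsWithin (0:ℝ) (Set.Ioi 0),
          (1/2) * m₀ ≤ Ub (c ε) ∧ Ub (c ε) ≤ 2 * Real.exp k₀ * M₀ ∧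
          (1/2) * m₀ ≤ Vb (c ε) ∧ Vb (c ε) ≤ 2 * Real.exp k₀ * M₀ := by
        filter_upwards [hcmem, hIoc] with ε hm hε
        have hg := main_bound κ t₀ r₀ hκ ht₀ hr₀ rt hrtC1 hrtmono hrt0 hrtt0 Ub Vb hUC1 hVC1
          hsys hUcont hVcont m₀ M₀ hm₀ hm₀M₀ hbdry hε.1 (c ε) hm.1 hm.2
        exact hconv (c ε) hp1.le hp2 hg
      have hcreg : Filter.Tendsto c (nhdsWithin 0 (Set.Ioi 0))
          (nhdsWithin p (region κ t₀ r₀ rt)) :=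
        tendsto_nhdsWithin_iff.2 ⟨hctend, hcmem.mono (fun ε h => h.1)⟩
      have hUp : Filter.Tendsto (fun ε => Ub (c ε)) (nhdsWithin 0 (Set.Ioi 0)) (nhds (Ub p)) :=
        ((hUcont.mono Set.subset_union_left) p ⟨hp1, hp2, hp3, hp4⟩).tendsto.comp hcreg
      have hVp : Filter.Tendsto (fun ε => Vb (c ε)) (nhdsWithin 0 (Set.Ioi 0)) (nhds (Vb p)) :=
        ((hVcont.mono Set.subset_union_left) p ⟨hp1, hp2, hp3, hp4⟩).tendsto.comp hcreg
      refine ⟨?_, ?_, ?_, ?_⟩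
      · exact ge_of_tendsto hUp (hgood.mono (fun ε h => h.1))
      · exact le_of_tendsto hUp (hgood.mono (fun ε h => h.2.1))
      · exact ge_of_tendsto hVp (hgood.mono (fun ε h => h.2.2.1))
      · exact le_of_tendsto hVp (hgood.mono (fun ε h => h.2.2.2))
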